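/- There exists a surjective p-morphism from the frame $(\mathbb{R}, R_{>1})$, where $x\,R_{>1}\,y$ iff $|x-y| > 1$, onto the finite frame $G = (\{0, 1, \ldots, N\}, R')$ where $x\,R'\,y$ iff ($x \ne y$ or $x = y = 0$), for any $N \ge 1$. -/

import Mathlib

theorem stmt_15 (N : ℕ) (hN : 1 ≤ N) :
    ∃ f : ℝ → Fin (N + 1),
      Function.Surjective f ∧
      (∀ x x' : ℝ, |x - x'| > 1 → (f x ≠ f x' ∨ (f x = 0 ∧ f x' = 0))) ∧
      (∀ (x : ℝ) (y : Fin (N + 1)), (f x ≠ y ∨ (f x = 0 ∧ y = 0)) →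
        ∃ x' : ℝ, |x - x'| > 1 ∧ f x' = y) := by
  classical
  set g : ℝ → ℕ := fun x =>
    if 1 ≤ ⌊x/2⌋ ∧ ⌊x/2⌋ ≤ (N:ℤ) ∧ x ≤ 2*⌊x/2⌋+1 then ⌊x/2⌋.toNat else 0 with hg
  have hle : ∀ x, g x ≤ N := by
    intro x; simp only [hg]; split
    · omega
    · omega
  have hA : ∀ (i : ℕ), 1 ≤ i → i ≤ N → ∀ x : ℝ, (2*i:ℝ) ≤ x → x ≤ 2*i+1 → g x = i := by
    intro i h1 h2 x hx1 hx2
    have hfl : ⌊x/2⌋ = (i:ℤ) := by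
      rw [Int.floor_eq_iff]
      constructor
      · push_cast; linarith
      · push_cast; linarith
    simp only [hg]
    rw [if_pos]
    · rw [hfl]; omega
    · refine ⟨by omega, by omega, ?_⟩
      rw [hfl]; push_cast; linarith
  have hB : ∀ x : ℝ, 1 ≤ g x → (2*(g x:ℝ) ≤ x ∧ x ≤ 2*(g x:ℝ)+1) := by
    intro x hx
    by_cases h : 1 ≤ ⌊x/2⌋ ∧ ⌊x/2⌋ ≤ (N:ℤ) ∧ x ≤ 2*⌊x/2⌋+1
    · have hgx : g x = ⌊x/2⌋.toNat := by simp only [hg]; rw [if_pos h]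
      have hnn : (0:ℤ) ≤ ⌊x/2⌋ := by omega
      have hfl := Int.floor_le (x/2)
      have hcast : ((⌊x/2⌋.toNat : ℕ) : ℝ) = ((⌊x/2⌋ : ℤ) : ℝ) := by
        exact_mod_cast congrArg (fun z : ℤ => (z : ℝ)) (Int.toNat_of_nonneg hnn)
      rw [hgx, hcast]
      exact ⟨by linarith, h.2.2⟩
    · exfalso; simp only [hg] at hx; rw [if_neg h] at hx; omega
  have hzero : ∀ x : ℝ, x ≤ -2 → g x = 0 := by
    intro x hx
    simp only [hg]
    rw [if_neg]
    rintro ⟨h1, -, -⟩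
    have : (1:ℝ) ≤ x/2 := by exact_mod_cast Int.le_floor.mp h1
    linarith
  refine ⟨fun x => ⟨g x, Nat.lt_succ_of_le (hle x)⟩, ?_, ?_, ?_⟩
  · intro y
    rcases Nat.eq_zero_or_pos y.val with hy | hy
    · refine ⟨-2, ?_⟩
      have : g (-2) = 0 := hzero _ le_rfl
      exact Fin.ext (by simp [this, hy])
    · refine ⟨2*y.val, ?_⟩
      have : g (2*y.val) = y.val := hA y.val hy (by omega) _ le_rfl (by linarith)
      exact Fin.ext (by simp [this])
  · intro x x' hd
    by_cases he : g x = g x'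
    · by_cases h0 : g x = 0
      · right
        constructor <;> exact Fin.ext (by simp [h0, ← he])
      · exfalso
        have h1 : 1 ≤ g x := by omega
        have hx := hB x h1
        have hx' := hB x' (he ▸ h1)
        rw [← he] at hx'
        have : |x - x'| ≤ 1 := abs_sub_le_iff.mpr ⟨by linarith [hx.1, hx.2, hx'.1, hx'.2], by linarith [hx.1, hx.2, hx'.1, hx'.2]⟩
        linarith
    · left; intro hc; exact he (by simpa [Fin.ext_iff] using hc)
  · intro x y hy
    rcases Nat.eq_zero_or_pos y.val with hy0 | hy0
    · refine ⟨min x 0 - 2, ?_, ?_⟩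
      · have h1 : min x 0 ≤ x := min_le_left x 0
        rw [abs_of_pos (by linarith)]
        linarith
      · have : g (min x 0 - 2) = 0 := hzero _ (by have := min_le_right x (0:ℝ); linarith)
        exact Fin.ext (by simp [this, hy0])
    · have hxy : g x ≠ y.val := by
        rcases hy with h | ⟨h1, h2⟩
        · intro hc; exact h (Fin.ext (by simpa using hc))
        · exfalso
          have : y.val = 0 := by rw [h2]; simp
          omega
      have hyN : y.val ≤ N := by omega
      rcases lt_or_ge x (2*(y.val:ℝ)) with h | h
      · refine ⟨2*y.val+1, ?_, ?_⟩
        · rw [abs_of_neg (by linarith)]; linarith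
        · have := hA y.val hy0 hyN (2*y.val+1) (by linarith) le_rfl
          exact Fin.ext (by simpa using this)
      · have hgt : 2*(y.val:ℝ)+1 < x := by
          by_contra hc
          push_neg at hc
          exact hxy (hA y.val hy0 hyN x h hc)
        refine ⟨2*y.val, ?_, ?_⟩
        · rw [abs_of_pos (by linarith)]; linarith
        · have := hA y.val hy0 hyN (2*y.val) le_rfl (by linarith)
          exact Fin.ext (by simpa using this)
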